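/- Let A : ℕ → ℕ be defined by A(0) = 1, A(1) = 2, and A(n) = 1 + C(A(n−2)+1, 2) + A(n−2)·(A(n−1) − A(n−2)) for n ≥ 2. Then for all n ≥ 2, one has 2·A(n) ≥ A(n−1)·A(n−2). -/
import Mathlib


def A : ℕ → ℕ
  | 0 => 1
  | 1 => 2
  | n + 2 => 1 + Nat.choose (A n + 1) 2 + A n * (A (n + 1) - A n)

lemma two_choose (a : ℕ) : 2 * Nat.choose (a + 1) 2 = a * (a + 1) := by
  rw [Nat.choose_two_right]
  simp only [Nat.add_sub_cancel]
  rw [mul_comm (a+1) a, Nat.mul_div_cancel' (Nat.even_mul_succ_self a).two_dvd]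

lemma A_pos : ∀ n, 1 ≤ A n
  | 0 => by simp [A]
  | 1 => by simp [A]
  | n + 2 => by rw [A]; omega

lemma A_mono : ∀ n, A n ≤ A (n + 1)
  | 0 => by simp [A]
  | 1 => by simp [A]
  | n + 2 => by
    show A (n + 2) ≤ A ((n + 1) + 2)
    rw [show A (n + 1 + 2) = 1 + Nat.choose (A (n + 1) + 1) 2 +
      A (n + 1) * (A (n + 2) - A (n + 1)) from rfl]
    have hsub : A (n + 2) - A (n + 1) ≤ A (n + 1) * (A (n + 2) - A (n + 1)) :=
      Nat.le_mul_of_pos_left _ (A_pos (n + 1))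
    have hch : A (n + 1) ≤ 1 + Nat.choose (A (n + 1) + 1) 2 := by
      have := two_choose (A (n + 1))
      nlinarith [A_pos (n + 1)]
    omega

theorem stmt_2 : ∀ n : ℕ, 2 ≤ n → A (n - 1) * A (n - 2) ≤ 2 * A n := by
  intro n hn
  obtain ⟨m, rfl⟩ := Nat.exists_eq_add_of_le hn
  have e1 : 2 + m - 1 = m + 1 := by omega
  have e2 : 2 + m - 2 = m := by omega
  have e3 : 2 + m = m + 2 := by omega
  rw [e1, e2, e3]
  have h := A_mono m
  obtain ⟨c, hc⟩ := Nat.exists_eq_add_of_le h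
  rw [A, hc]
  have hsub : A m + c - A m = c := by omega
  rw [hsub]
  have := two_choose (A m)
  nlinarith [A_pos m]
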